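/- Let p be a prime and r ≥ 1, m ≥ 0 integers. The number of subgroups (sublattices) of ℤ^r of index p^m equals ∏_{t=1}^{r-1} (p^{m+t} - 1)/(p^t - 1). -/

import Mathlib

open AddSubgroup

variable {G : Type*} [AddCommGroup G]

/-- The sublattice of `ℤ × G` with first-coordinate step `d`, base `M`, shift `x`. -/
def Lsub (d : ℤ) (M : AddSubgroup G) (x : G) : AddSubgroup (ℤ × G) where
  carrier := {q | ∃ k : ℤ, q.1 = k * d ∧ q.2 - k • x ∈ M}
  zero_mem' := ⟨0, by simp, by simpa using M.zero_mem⟩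
  add_mem' := by
    rintro ⟨a, g⟩ ⟨b, h⟩ ⟨k, hk, hkM⟩ ⟨l, hl, hlM⟩
    have hk' : a = k * d := hk
    have hl' : b = l * d := hl
    refine ⟨k + l, by simp only [Prod.fst_add]; rw [hk', hl']; ring, ?_⟩
    have := M.add_mem hkM hlM
    convert this using 1
    simp only [Prod.snd_add, add_zsmul]
    abel
  neg_mem' := by
    rintro ⟨a, g⟩ ⟨k, hk, hkM⟩
    have hk' : a = k * d := hk
    refine ⟨-k, by simp only [Prod.fst_neg]; rw [hk']; ring, ?_⟩
    have := M.neg_mem hkM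
    convert this using 1
    simp only [Prod.snd_neg, neg_zsmul]
    abel

lemma mem_Lsub {d : ℤ} {M : AddSubgroup G} {x : G} {q : ℤ × G} :
    q ∈ Lsub d M x ↔ ∃ k : ℤ, q.1 = k * d ∧ q.2 - k • x ∈ M := Iff.rfl

lemma self_mem_Lsub (d : ℤ) (M : AddSubgroup G) (x : G) : (d, x) ∈ Lsub d M x :=
  ⟨1, (one_mul d).symm, by simpa using M.zero_mem⟩

lemma Lsub_congr {d : ℤ} {M : AddSubgroup G} {x x' : G} (h : x - x' ∈ M) :
    Lsub d M x = Lsub d M x' := by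
  have key : ∀ y y' : G, y - y' ∈ M → ∀ q : ℤ × G, q ∈ Lsub d M y → q ∈ Lsub d M y' := by
    rintro y y' hy ⟨a, g⟩ ⟨k, hk, hkM⟩
    refine ⟨k, hk, ?_⟩
    have := M.add_mem hkM (M.zsmul_mem hy k)
    convert this using 1
    rw [smul_sub]
    abel
  ext q
  exact ⟨key x x' h q, key x' x (by simpa using M.neg_mem h) q⟩

lemma mem_Lsub_iff {d : ℤ} (hd : d ≠ 0) {M : AddSubgroup G} {x : G} {k : ℤ} {g : G} :
    (k * d, g) ∈ Lsub d M x ↔ g - k • x ∈ M := by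
  constructor
  · rintro ⟨l, hl, hlM⟩
    have : l = k := mul_right_cancel₀ hd hl.symm
    subst this; exact hlM
  · intro h; exact ⟨k, rfl, h⟩

lemma mem_Lsub_zero_iff {d : ℤ} (hd : d ≠ 0) {M : AddSubgroup G} {x : G} {g : G} :
    ((0 : ℤ), g) ∈ Lsub d M x ↔ g ∈ M := by
  have h0 : (0 : ℤ) = 0 * d := by ring
  rw [show (((0:ℤ), g) : ℤ × G) = ((0 * d : ℤ), g) by rw [zero_mul]]
  rw [mem_Lsub_iff hd]
  simp

lemma map_fst_Lsub (d : ℤ) (M : AddSubgroup G) (x : G) :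
    (Lsub d M x).map (AddMonoidHom.fst ℤ G) = zmultiples d := by
  ext a
  simp only [AddSubgroup.mem_map, AddMonoidHom.coe_fst]
  constructor
  · rintro ⟨⟨b, g⟩, ⟨k, hk, -⟩, rfl⟩
    exact Int.mem_zmultiples_iff.mpr ⟨k, by rw [hk, mul_comm]⟩
  · intro ha
    obtain ⟨k, hk⟩ := Int.mem_zmultiples_iff.mp ha
    exact ⟨(a, k • x), ⟨k, by rw [hk, mul_comm], by simpa using M.zero_mem⟩, rfl⟩
open AddSubgroup
variable {G : Type*} [AddCommGroup G]

lemma Lsub_le_prod (d : ℤ) (M : AddSubgroup G) (x : G) :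
    Lsub d M x ≤ (zmultiples d).prod ⊤ := by
  rintro ⟨a, g⟩ ⟨k, hk, -⟩
  exact ⟨Int.mem_zmultiples_iff.mpr ⟨k, by rw [show a = k * d from hk, mul_comm]⟩, trivial⟩

lemma index_Lsub {d : ℤ} (hd : d ≠ 0) (M : AddSubgroup G) (x : G) :
    (Lsub d M x).index = M.index * d.natAbs := by
  set K : AddSubgroup (ℤ × G) := (zmultiples d).prod ⊤ with hK
  have hLK : Lsub d M x ≤ K := Lsub_le_prod d M x
  have hKindex : K.index = d.natAbs := by
    rw [hK, AddSubgroup.index_prod, AddSubgroup.index_top, mul_one, Int.index_zmultiples]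
  let ψ : ↥K →+ G ⧸ M := AddMonoidHom.mk'
    (fun u => QuotientAddGroup.mk ((u : ℤ × G).2 - ((u : ℤ × G).1 / d) • x))
    (by
      rintro ⟨⟨a, g⟩, ha, -⟩ ⟨⟨b, h⟩, hb, -⟩
      obtain ⟨k, hk⟩ := Int.mem_zmultiples_iff.mp ha
      obtain ⟨l, hl⟩ := Int.mem_zmultiples_iff.mp hb
      subst hk hl
      show QuotientAddGroup.mk _ = QuotientAddGroup.mk _ + QuotientAddGroup.mk _
      rw [← QuotientAddGroup.mk_add]
      congr 1
      show (g + h) - ((d * k + d * l) / d) • x =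
        (g - (d * k / d) • x) + (h - (d * l / d) • x)
      rw [Int.mul_ediv_cancel_left _ hd, Int.mul_ediv_cancel_left _ hd, ← mul_add,
        Int.mul_ediv_cancel_left _ hd, add_zsmul]
      abel)
  have hψ : Function.Surjective ψ := by
    intro q
    obtain ⟨g, rfl⟩ := QuotientAddGroup.mk_surjective q
    refine ⟨⟨((0 : ℤ), g), ⟨zero_mem _, trivial⟩⟩, ?_⟩
    show QuotientAddGroup.mk _ = _
    rw [Int.zero_ediv]
    simp
  have hker : ψ.ker = (Lsub d M x).addSubgroupOf K := by
    ext u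
    obtain ⟨⟨a, g⟩, ha, -⟩ := u
    have hdvd : d ∣ a := Int.mem_zmultiples_iff.mp ha
    rw [AddMonoidHom.mem_ker, AddSubgroup.mem_addSubgroupOf]
    show QuotientAddGroup.mk (g - (a / d) • x) = 0 ↔ ((a, g) : ℤ × G) ∈ Lsub d M x
    rw [QuotientAddGroup.eq_zero_iff]
    constructor
    · intro hgm
      exact ⟨a / d, (Int.ediv_mul_cancel hdvd).symm, hgm⟩
    · rintro ⟨k, hk, hkM⟩
      have : a / d = k := by rw [show a = k * d from hk, Int.mul_ediv_cancel _ hd]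
      rw [this]
      exact hkM
  have hrel : (Lsub d M x).relIndex K = M.index := by
    rw [AddSubgroup.relIndex, AddSubgroup.index_eq_card, ← hker, AddSubgroup.index_eq_card]
    exact Nat.card_congr (QuotientAddGroup.quotientKerEquivOfSurjective ψ hψ).toEquiv
  rw [← AddSubgroup.relIndex_mul_index hLK, hrel, hKindex]

lemma exists_Lsub_eq (L : AddSubgroup (ℤ × G)) (hL : L.index ≠ 0) :
    ∃ (d : ℕ) (M : AddSubgroup G) (x : G), 0 < d ∧ L = Lsub (d : ℤ) M x := by
  obtain ⟨a, ha⟩ := Int.subgroup_cyclic (L.map (AddMonoidHom.fst ℤ G))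
  rw [← AddSubgroup.zmultiples_eq_closure] at ha
  have hmem : ∀ q : ℤ × G, q ∈ L → a ∣ q.1 := by
    intro q hq
    have : q.1 ∈ L.map (AddMonoidHom.fst ℤ G) := ⟨q, hq, rfl⟩
    rw [ha] at this
    exact Int.mem_zmultiples_iff.mp this
  have ha0 : a ≠ 0 := by
    rintro rfl
    have hbot : L ≤ ((⊥ : AddSubgroup ℤ).prod ⊤) := by
      rintro ⟨b, g⟩ hq
      have := hmem _ hq
      simp only [zero_dvd_iff] at this
      exact ⟨by simpa using this, trivial⟩
    have hdvd := AddSubgroup.index_dvd_of_le hbot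
    rw [AddSubgroup.index_prod, AddSubgroup.index_top, mul_one, AddSubgroup.index_bot] at hdvd
    rw [Nat.card_eq_zero_of_infinite] at hdvd
    exact hL (zero_dvd_iff.mp hdvd)
  refine ⟨a.natAbs, L.comap (AddMonoidHom.inr ℤ G), ?_⟩
  have hd0 : (a.natAbs : ℤ) ≠ 0 := by
    simpa using ha0
  have hdmem : ((a.natAbs : ℤ)) ∈ L.map (AddMonoidHom.fst ℤ G) := by
    rw [ha]
    exact Int.mem_zmultiples_iff.mpr (Int.dvd_natAbs.mpr dvd_rfl)
  obtain ⟨⟨a', x⟩, hx, hax⟩ := hdmem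
  simp only [AddMonoidHom.coe_fst] at hax
  subst hax
  refine ⟨x, Int.natAbs_pos.mpr ha0, ?_⟩
  ext ⟨b, g⟩
  constructor
  · intro hbg
    have hb : ((a.natAbs : ℤ)) ∣ b := by
      exact Int.natAbs_dvd.mpr (hmem _ hbg)
    obtain ⟨k, hk⟩ := hb
    refine ⟨k, by rw [hk, mul_comm], ?_⟩
    have hsub : ((b, g) : ℤ × G) - k • ((a.natAbs : ℤ), x) ∈ L := L.sub_mem hbg (L.zsmul_mem hx k)
    have : ((b, g) : ℤ × G) - k • (((a.natAbs : ℤ)), x) = ((0 : ℤ), g - k • x) := by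
      ext
      · show b - k • (a.natAbs : ℤ) = 0
        simp only [zsmul_eq_mul, Int.cast_id]
        rw [hk]; ring
      · rfl
    rw [this] at hsub
    exact hsub
  · rintro ⟨k, hk, hkM⟩
    have h1 : ((0 : ℤ), g - k • x) ∈ L := hkM
    have h2 := L.add_mem h1 (L.zsmul_mem hx k)
    have : ((0 : ℤ), g - k • x) + k • (((a.natAbs : ℤ)), x) = ((b, g) : ℤ × G) := by
      ext
      · show 0 + k • (a.natAbs : ℤ) = b
        simp only [zsmul_eq_mul, Int.cast_id]
        rw [show b = k * (a.natAbs : ℤ) from hk]; ring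
      · show (g - k • x) + k • x = g
        abel
    rwa [this] at h2

/-- `Lsub` descends to the quotient `G ⧸ M` in the shift argument. -/
def LsubQ (d : ℤ) (M : AddSubgroup G) (q : G ⧸ M) : AddSubgroup (ℤ × G) :=
  Quotient.liftOn' q (Lsub d M) (by
    intro x y h
    rw [QuotientAddGroup.leftRel_apply] at h
    refine Lsub_congr ?_
    have h2 : -y + x ∈ M := by simpa [neg_add_rev] using M.neg_mem h
    rwa [sub_eq_add_neg, add_comm])

lemma LsubQ_mk (d : ℤ) (M : AddSubgroup G) (x : G) :
    LsubQ d M (QuotientAddGroup.mk x) = Lsub d M x := rfl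

lemma index_LsubQ {d : ℤ} (hd : d ≠ 0) (M : AddSubgroup G) (q : G ⧸ M) :
    (LsubQ d M q).index = M.index * d.natAbs := by
  induction q using Quotient.inductionOn' with
  | h x => exact index_Lsub hd M x

lemma natCard_sigma {ι : Type*} [Fintype ι] (f : ι → Type*) [∀ i, Finite (f i)] :
    Nat.card (Σ i, f i) = ∑ i, Nat.card (f i) := by
  letI := fun i => Fintype.ofFinite (f i)
  simp only [Nat.card_eq_fintype_card]
  exact Fintype.card_sigma

theorem step_card (p m : ℕ) (hp : p.Prime)
    (hfin : ∀ b : ℕ, Finite {M : AddSubgroup G // M.index = p ^ b}) :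
    Finite {L : AddSubgroup (ℤ × G) // L.index = p ^ m} ∧
    Nat.card {L : AddSubgroup (ℤ × G) // L.index = p ^ m}
      = ∑ b ∈ Finset.range (m + 1),
          p ^ b * Nat.card {M : AddSubgroup G // M.index = p ^ b} := by
  classical
  have hppos : 0 < p := hp.pos
  have hdnz : ∀ c : ℕ, ((p ^ c : ℕ) : ℤ) ≠ 0 := fun c => by
    exact_mod_cast pow_ne_zero c hppos.ne'
  -- the parametrization
  set Ψ : (Σ b : Fin (m + 1), Σ M : {M : AddSubgroup G // M.index = p ^ (b : ℕ)},
      G ⧸ (M : AddSubgroup G)) → {L : AddSubgroup (ℤ × G) // L.index = p ^ m} :=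
    fun s => ⟨LsubQ ((p ^ (m - (s.1 : ℕ)) : ℕ) : ℤ) s.2.1 s.2.2, by
      rw [index_LsubQ (hdnz _), s.2.1.2, Int.natAbs_natCast, ← pow_add]
      congr 1
      have := s.1.isLt
      omega⟩ with hΨ
  have hinj : Function.Injective Ψ := by
    rintro ⟨b, ⟨M, hM⟩, q⟩ ⟨b', ⟨M', hM'⟩, q'⟩ h
    induction q using Quotient.inductionOn' with | h x => ?_
    induction q' using Quotient.inductionOn' with | h x' => ?_
    simp only [hΨ, Subtype.mk.injEq, LsubQ_mk] at h
    -- b = b'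
    have hmap := congrArg (fun L : AddSubgroup (ℤ × G) => (L.map (AddMonoidHom.fst ℤ G)).index) h
    simp only [map_fst_Lsub, Int.index_zmultiples, Int.natAbs_natCast] at hmap
    have hbb : (b : ℕ) = (b' : ℕ) := by
      have h1 := Nat.pow_right_injective hp.two_le hmap
      have := b.isLt; have := b'.isLt
      omega
    have hbb' : b = b' := Fin.ext hbb
    subst hbb'
    -- M = M'
    have hMM' : M = M' := by
      ext g
      rw [← mem_Lsub_zero_iff (x := x) (hdnz (m - (b : ℕ))), h,
        mem_Lsub_zero_iff (hdnz (m - (b : ℕ)))]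
    subst hMM'
    have hsub : (⟨M, hM⟩ : {M : AddSubgroup G // M.index = p ^ (b : ℕ)}) = ⟨M, hM'⟩ := rfl
    -- x' - x ∈ M
    have hx' : (((p ^ (m - (b : ℕ)) : ℕ) : ℤ), x') ∈
        Lsub ((p ^ (m - (b : ℕ)) : ℕ) : ℤ) M x := by
      rw [h]; exact self_mem_Lsub _ _ _
    obtain ⟨k, hk, hkM⟩ := hx'
    have hk1 : k = 1 := by
      have : (1 : ℤ) * ((p ^ (m - (b : ℕ)) : ℕ) : ℤ) = k * ((p ^ (m - (b : ℕ)) : ℕ) : ℤ) := by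
        rw [one_mul]; exact hk
      exact (mul_right_cancel₀ (hdnz _) this).symm
    subst hk1
    rw [one_smul] at hkM
    have hqq : (QuotientAddGroup.mk x : G ⧸ M) = QuotientAddGroup.mk x' := by
      apply (QuotientAddGroup.eq (s := M)).mpr
      simpa [neg_add_eq_sub] using hkM
    exact congrArg (fun q : G ⧸ M =>
      (⟨b, ⟨M, hM⟩, q⟩ : Σ b' : Fin (m + 1),
        Σ N : {M : AddSubgroup G // M.index = p ^ (b' : ℕ)}, G ⧸ (N : AddSubgroup G))) hqq
  have hsurj : Function.Surjective Ψ := by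
    rintro ⟨L, hL⟩
    have hLnz : L.index ≠ 0 := by rw [hL]; exact pow_ne_zero m hppos.ne'
    obtain ⟨d, M, x, hd, rfl⟩ := exists_Lsub_eq L hLnz
    have hidx : M.index * d = p ^ m := by
      have := index_Lsub (M := M) (x := x) (d := (d : ℤ)) (by exact_mod_cast hd.ne') 
      rw [Int.natAbs_natCast] at this
      rw [← this, hL]
    have hdvd : d ∣ p ^ m := Dvd.intro_left _ hidx
    obtain ⟨a, ha, rfl⟩ := (Nat.dvd_prime_pow hp).mp hdvd
    have hMidx : M.index = p ^ (m - a) := by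
      have hpow : p ^ (m - a) * p ^ a = p ^ m := by rw [← pow_add]; congr 1; omega
      have := hidx.trans hpow.symm
      exact Nat.eq_of_mul_eq_mul_right (pow_pos hppos a) this
    refine ⟨⟨⟨m - a, by omega⟩, ⟨M, hMidx⟩, QuotientAddGroup.mk x⟩, ?_⟩
    apply Subtype.ext
    simp only [hΨ]
    show LsubQ ((p ^ (m - (m - a)) : ℕ) : ℤ) M (QuotientAddGroup.mk x) = Lsub ((p ^ a : ℕ) : ℤ) M x
    rw [LsubQ_mk, show m - (m - a) = a by omega]
  -- finiteness instances
  haveI : ∀ b : Fin (m + 1), Finite {M : AddSubgroup G // M.index = p ^ (b : ℕ)} :=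
    fun b => hfin _
  haveI hQfin : ∀ (b : Fin (m + 1)) (M : {M : AddSubgroup G // M.index = p ^ (b : ℕ)}),
      Finite (G ⧸ (M : AddSubgroup G)) := by
    intro b M
    apply Nat.finite_of_card_ne_zero
    rw [← AddSubgroup.index_eq_card, M.2]
    exact pow_ne_zero _ hppos.ne'
  refine ⟨Finite.of_surjective Ψ hsurj, ?_⟩
  rw [← Nat.card_eq_of_bijective Ψ ⟨hinj, hsurj⟩]
  rw [natCard_sigma]
  rw [← Fin.sum_univ_eq_sum_range (fun b => p ^ b * Nat.card {M : AddSubgroup G // M.index = p ^ b})]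
  apply Finset.sum_congr rfl
  intro b _
  letI : Fintype {M : AddSubgroup G // M.index = p ^ (b : ℕ)} := Fintype.ofFinite _
  rw [natCard_sigma]
  have : ∀ M : {M : AddSubgroup G // M.index = p ^ (b : ℕ)},
      Nat.card (G ⧸ (M : AddSubgroup G)) = p ^ (b : ℕ) := by
    intro M
    rw [← AddSubgroup.index_eq_card, M.2]
  rw [Finset.sum_congr rfl (fun M _ => this M), Finset.sum_const, smul_eq_mul]
  rw [Nat.card_eq_fintype_card, ← Finset.card_univ]
  ring

/-- Transfer of the set of subgroups of given index along an additive equivalence. -/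
def subgroupIndexEquiv {A B : Type*} [AddCommGroup A] [AddCommGroup B] (e : A ≃+ B) (n : ℕ) :
    {L : AddSubgroup A // L.index = n} ≃ {L : AddSubgroup B // L.index = n} where
  toFun L := ⟨L.1.comap e.symm.toAddMonoidHom, by
    rw [AddSubgroup.index_comap_of_surjective _ e.symm.surjective, L.2]⟩
  invFun L := ⟨L.1.comap e.toAddMonoidHom, by
    rw [AddSubgroup.index_comap_of_surjective _ e.surjective, L.2]⟩
  left_inv L := Subtype.ext (by
    ext x
    simp [AddSubgroup.mem_comap])
  right_inv L := Subtype.ext (by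
    ext x
    simp [AddSubgroup.mem_comap])

lemma int_base (n : ℕ) (hn : n ≠ 0) :
    Finite {L : AddSubgroup ℤ // L.index = n} ∧
      Nat.card {L : AddSubgroup ℤ // L.index = n} = 1 := by
  have huniq : ∀ L : {L : AddSubgroup ℤ // L.index = n},
      L.1 = AddSubgroup.zmultiples (n : ℤ) := by
    rintro ⟨L, hL⟩
    obtain ⟨a, ha⟩ := Int.subgroup_cyclic L
    rw [← AddSubgroup.zmultiples_eq_closure] at ha
    have hidx : a.natAbs = n := by rw [← Int.index_zmultiples, ← ha, hL]
    show L = _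
    rw [ha]
    ext b
    rw [Int.mem_zmultiples_iff, Int.mem_zmultiples_iff, ← Int.natAbs_dvd, hidx]
  have hne : Nonempty {L : AddSubgroup ℤ // L.index = n} :=
    ⟨⟨AddSubgroup.zmultiples (n : ℤ), by rw [Int.index_zmultiples, Int.natAbs_natCast]⟩⟩
  have hsub : Subsingleton {L : AddSubgroup ℤ // L.index = n} :=
    ⟨fun L L' => Subtype.ext ((huniq L).trans (huniq L').symm)⟩
  exact ⟨Finite.of_subsingleton,
    Nat.card_eq_one_iff_unique.mpr ⟨hsub, hne⟩⟩

/-- `ℤ^1 ≃+ ℤ`. -/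
def eOne : (Fin 1 → ℤ) ≃+ ℤ where
  toFun f := f 0
  invFun a := fun _ => a
  left_inv f := funext fun i => congrArg f (Subsingleton.elim 0 i)
  right_inv a := rfl
  map_add' f g := rfl

/-- `ℤ^(n+1) ≃+ ℤ × ℤ^n`. -/
def eSucc (n : ℕ) : (Fin (n + 1) → ℤ) ≃+ ℤ × (Fin n → ℤ) :=
  { (Fin.consEquiv fun _ : Fin (n + 1) => ℤ).symm with map_add' := fun f g => rfl }

lemma prod_Icc_one_eq_range (f : ℕ → ℚ) (n : ℕ) :
    ∏ t ∈ Finset.Icc 1 n, f t = ∏ i ∈ Finset.range n, f (i + 1) := by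
  rw [← Finset.Ico_add_one_right_eq_Icc, Finset.prod_Ico_eq_prod_range]
  exact Finset.prod_congr rfl fun i _ => by rw [add_comm]

lemma qid (p : ℚ) (hp : 2 ≤ p) (r : ℕ) (m : ℕ) :
    ∑ b ∈ Finset.range (m + 1),
        p ^ b * ∏ i ∈ Finset.range r, (p ^ (b + (i + 1)) - 1) / (p ^ (i + 1) - 1)
      = ∏ i ∈ Finset.range (r + 1), (p ^ (m + (i + 1)) - 1) / (p ^ (i + 1) - 1) := by
  have hne : ∀ k : ℕ, p ^ (k + 1) - 1 ≠ 0 := by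
    intro k
    have h1 : (1 : ℚ) < p ^ (k + 1) := by
      apply one_lt_pow₀ (by linarith) (Nat.succ_ne_zero k)
    exact sub_ne_zero_of_ne (ne_of_gt h1)
  induction m with
  | zero =>
    rw [Finset.sum_range_one]
    simp only [pow_zero, one_mul, zero_add]
    rw [Finset.prod_eq_one fun i _ => div_self (hne i),
      Finset.prod_eq_one fun i _ => div_self (hne i)]
  | succ m ih =>
    rw [Finset.sum_range_succ, ih]
    simp only [Finset.prod_div_distrib]
    set Dr : ℚ := ∏ i ∈ Finset.range r, (p ^ (i + 1) - 1) with hDrdef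
    set B : ℚ := ∏ i ∈ Finset.range r, (p ^ (m + 2 + i) - 1) with hBdef
    have hD : ∏ i ∈ Finset.range (r + 1), (p ^ (i + 1) - 1) = Dr * (p ^ (r + 1) - 1) :=
      Finset.prod_range_succ _ r
    have hN1 : ∏ i ∈ Finset.range (r + 1), (p ^ (m + (i + 1)) - 1)
        = B * (p ^ (m + 1) - 1) := by
      rw [Finset.prod_range_succ']
      congr 1
      rw [hBdef]
      exact Finset.prod_congr rfl fun i _ => by
        rw [show m + (i + 1 + 1) = m + 2 + i by omega]
    have hN2 : ∏ i ∈ Finset.range (r + 1), (p ^ (m + 1 + (i + 1)) - 1)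
        = B * (p ^ (m + r + 2) - 1) := by
      rw [Finset.prod_range_succ]
      rw [show m + 1 + (r + 1) = m + r + 2 by omega]
      congr 1
      rw [hBdef]
      exact Finset.prod_congr rfl fun i _ => by
        rw [show m + 1 + (i + 1) = m + 2 + i by omega]
    have hMid : ∏ i ∈ Finset.range r, (p ^ (m + 1 + (i + 1)) - 1) = B := by
      rw [hBdef]
      exact Finset.prod_congr rfl fun i _ => by
        rw [show m + 1 + (i + 1) = m + 2 + i by omega]
    rw [hN1, hN2, hMid, hD]
    have hDr : Dr ≠ 0 := by
      rw [hDrdef]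
      exact Finset.prod_ne_zero_iff.mpr fun i _ => hne i
    have hr1 : p ^ (r + 1) - 1 ≠ 0 := hne r
    have hm1 : p ^ (m + 1) - 1 ≠ 0 := hne m
    rw [show m + r + 2 = (m + 1) + (r + 1) by omega, pow_add]
    field_simp
    ring

lemma main_ind (p : ℕ) (hp : p.Prime) (r : ℕ) :
    (∀ m : ℕ, Finite {L : AddSubgroup (Fin (r + 1) → ℤ) // L.index = p ^ m}) ∧
    (∀ m : ℕ, (Nat.card {L : AddSubgroup (Fin (r + 1) → ℤ) // L.index = p ^ m} : ℚ)
        = ∏ i ∈ Finset.range r, ((p : ℚ) ^ (m + (i + 1)) - 1) / ((p : ℚ) ^ (i + 1) - 1)) := by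
  induction r with
  | zero =>
    constructor
    · intro m
      have := (int_base (p ^ m) (pow_ne_zero m hp.pos.ne')).1
      exact Finite.of_equiv _ (subgroupIndexEquiv eOne.symm (p ^ m))
    · intro m
      rw [Finset.range_zero, Finset.prod_empty]
      rw [Nat.card_congr (subgroupIndexEquiv eOne (p ^ m)),
        (int_base (p ^ m) (pow_ne_zero m hp.pos.ne')).2]
      norm_num
  | succ r ih =>
    have hfin' : ∀ b : ℕ, Finite {M : AddSubgroup (Fin (r + 1) → ℤ) // M.index = p ^ b} :=
      fun b => ih.1 b
    constructor
    · intro m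
      have h := (step_card (G := Fin (r + 1) → ℤ) p m hp hfin').1
      exact Finite.of_equiv _ (subgroupIndexEquiv (eSucc (r + 1)).symm (p ^ m))
    · intro m
      have hcardeq : Nat.card {L : AddSubgroup (Fin (r + 1 + 1) → ℤ) // L.index = p ^ m} =
          Nat.card {L : AddSubgroup (ℤ × (Fin (r + 1) → ℤ)) // L.index = p ^ m} :=
        Nat.card_congr (subgroupIndexEquiv (eSucc (r + 1)) (p ^ m))
      rw [hcardeq, (step_card p m hp hfin').2]
      push_cast
      rw [Finset.sum_congr rfl (fun b _ => by rw [ih.2 b])]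
      have hp2 : (2 : ℚ) ≤ (p : ℚ) := by exact_mod_cast hp.two_le
      exact qid (p : ℚ) hp2 r m

/-- The number of sublattices of `ℤ^r` of index `p^m` is `∏_{t=1}^{r-1} (p^{m+t}-1)/(p^t-1)`. -/
theorem stmt14 (p r m : ℕ) (hp : p.Prime) (hr : 1 ≤ r) :
    (Nat.card {L : AddSubgroup (Fin r → ℤ) // L.index = p ^ m} : ℚ) =
      ∏ t ∈ Finset.Icc 1 (r - 1), ((p : ℚ) ^ (m + t) - 1) / ((p : ℚ) ^ t - 1) := by
  obtain ⟨s, rfl⟩ : ∃ s, r = s + 1 := ⟨r - 1, by omega⟩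
  rw [show s + 1 - 1 = s by omega, prod_Icc_one_eq_range]
  exact (main_ind p hp s).2 m
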